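/- Let g ~ qbl(k1, γ) with witness constant d, set k0 := ⌈log N / γ⌉, suppose N ≥ e^{γ k1} and ‖(g^{k0})'‖_∞ ≤ 2π k0, and let h be a good(δ̄, N_δ̄) bijection. Then there is a constant C, depending only on d and γ, such that E[ ‖ĝ^{k0} − g̃^{k0}‖₂² ] ≤ C·( k0·N_δ̄/N + k0³/N + δ̄²·k0³/N² ). -/

import Mathlib

open MeasureTheory ProbabilityTheory Finset

noncomputable section

/-- `t` is the vector of order statistics of `N` i.i.d. samples from the uniform
distribution on the interval `[0, b]`: there exist i.i.d. random variables `u i`,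
each uniformly distributed on `[0, b]`, such that for every `ω` the vector
`(t i ω)_i` is the monotone rearrangement of `(u i ω)_i`. -/
def IsUniformOrderStats {Ω : Type*} [MeasurableSpace Ω] (μ : Measure Ω) (b : ℝ)
    {N : ℕ} (t : Fin N → Ω → ℝ) : Prop :=
  ∃ u : Fin N → Ω → ℝ,
    (∀ i, Measurable (u i)) ∧
    iIndepFun u μ ∧
    (∀ i, Measure.map (u i) μ = (ENNReal.ofReal b)⁻¹ • volume.restrict (Set.Icc 0 b)) ∧
    ∀ ω, Monotone (fun i => t i ω) ∧ ∃ σ : Equiv.Perm (Fin N), ∀ i, t i ω = u (σ i) ω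

/-- A permutation `h` of `{1, …, N}` is `good(δ, Nδ)` if at most `Nδ` indices are
moved by more than `δ`. -/
def GoodPerm {N : ℕ} (δ Nδ : ℕ) (h : Equiv.Perm (Fin N)) : Prop :=
  (Finset.univ.filter fun i : Fin N => (δ : ℤ) < |(i.1 : ℤ) - ((h i).1 : ℤ)|).card ≤ Nδ

/-- The estimated `k`-th Fourier series coefficient from samples `s 1, …, s N`
(nominally placed at locations `i/N`): `(1/N) ∑_{i=1}^N s i · e^{-2πjki/N}`. -/
def dftCoeff (N : ℕ) (s : Fin N → ℂ) (k : ℤ) : ℂ :=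
  (N : ℂ)⁻¹ * ∑ i : Fin N, s i *
    Complex.exp (-(2 * (Real.pi : ℂ) * Complex.I * (k : ℂ) * ((i.1 : ℂ) + 1) / (N : ℂ)))

/-- The 1-periodic trigonometric polynomial `∑_{|k| ≤ k0} c k · e^{2πjkx}`. -/
def trigPoly (k0 : ℕ) (c : ℤ → ℂ) (x : ℝ) : ℂ :=
  ∑ k ∈ Finset.Icc (-(k0 : ℤ)) (k0 : ℤ), c k *
    Complex.exp (2 * (Real.pi : ℂ) * Complex.I * (k : ℂ) * (x : ℂ))

lemma mob_orth (m : ℤ) : (∫ x in (0:ℝ)..1, Complex.exp (2 * (Real.pi : ℂ) * Complex.I * (m : ℂ) * (x : ℝ)))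
    = if m = 0 then 1 else 0 := by
  rcases eq_or_ne m 0 with hm | hm
  · simp [hm]
  · have hc : (2 * (Real.pi : ℂ) * Complex.I * (m : ℂ)) ≠ 0 := by
      simp [Real.pi_ne_zero, Complex.I_ne_zero, hm]
    rw [if_neg hm]
    rw [integral_exp_mul_complex (a := 0) (b := 1) hc]
    have h1 : (2 * (Real.pi : ℂ) * Complex.I * (m : ℂ)) * (1:ℝ) = (m : ℂ) * (2 * Real.pi * Complex.I) := by
      push_cast; ring
    rw [h1, Complex.exp_int_mul_two_pi_mul_I]
    simp

lemma mob_trigPoly_continuous (k0 : ℕ) (c : ℤ → ℂ) : Continuous (trigPoly k0 c) := by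
  unfold trigPoly
  fun_prop

lemma mob_parseval (k0 : ℕ) (c : ℤ → ℂ) :
    (∫ x in (0:ℝ)..1, ‖trigPoly k0 c x‖ ^ 2)
      = ∑ k ∈ Finset.Icc (-(k0 : ℤ)) (k0 : ℤ), ‖c k‖ ^ 2 := by
  set S := Finset.Icc (-(k0 : ℤ)) (k0 : ℤ)
  have key : (∫ x in (0:ℝ)..1, (trigPoly k0 c x * (starRingEnd ℂ) (trigPoly k0 c x)))
      = ∑ k ∈ S, (‖c k‖ ^ 2 : ℂ) := by
    have expand : ∀ x : ℝ, trigPoly k0 c x * (starRingEnd ℂ) (trigPoly k0 c x)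
        = ∑ k ∈ S, ∑ l ∈ S, (c k * (starRingEnd ℂ) (c l)) *
            Complex.exp (2 * (Real.pi : ℂ) * Complex.I * ((k - l : ℤ) : ℂ) * (x : ℂ)) := by
      intro x
      unfold trigPoly
      rw [map_sum, Finset.sum_mul_sum]
      refine Finset.sum_congr rfl fun k _ => Finset.sum_congr rfl fun l _ => ?_
      rw [map_mul, ← Complex.exp_conj]
      have hc : (starRingEnd ℂ) (2 * (Real.pi : ℂ) * Complex.I * (l : ℂ) * (x : ℂ))
          = -(2 * (Real.pi : ℂ) * Complex.I * (l : ℂ) * (x : ℂ)) := by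
        have h2 : (2 * (Real.pi : ℂ) * Complex.I * (l : ℂ) * (x : ℂ))
            = ((2 * Real.pi * (l : ℝ) * x : ℝ) : ℂ) * Complex.I := by push_cast; ring
        rw [h2, map_mul, Complex.conj_I, Complex.conj_ofReal]
        push_cast; ring
      rw [hc, mul_mul_mul_comm, ← Complex.exp_add]
      push_cast
      ring_nf
    simp_rw [expand]
    rw [intervalIntegral.integral_finset_sum]
    · refine Finset.sum_congr rfl fun k hk => ?_
      rw [intervalIntegral.integral_finset_sum]
      · have : ∀ l ∈ S, (∫ x in (0:ℝ)..1, (c k * (starRingEnd ℂ) (c l)) *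
            Complex.exp (2 * (Real.pi : ℂ) * Complex.I * ((k - l : ℤ) : ℂ) * (x : ℂ)))
            = if l = k then c k * (starRingEnd ℂ) (c k) else 0 := by
          intro l _
          rw [intervalIntegral.integral_const_mul, mob_orth (k - l)]
          rcases eq_or_ne l k with rfl | hlk
          · simp
          · rw [if_neg (fun hh => hlk (by omega)), if_neg hlk, mul_zero]
        rw [Finset.sum_congr rfl this, Finset.sum_ite_eq' S k
          (fun _ => c k * (starRingEnd ℂ) (c k)), if_pos hk, Complex.mul_conj,
          Complex.normSq_eq_norm_sq]
        norm_cast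
      · intro l _
        apply Continuous.intervalIntegrable
        fun_prop
    · intro k _
      apply Continuous.intervalIntegrable
      apply continuous_finset_sum
      intro l _
      fun_prop
  have hre : ∀ x : ℝ, ‖trigPoly k0 c x‖ ^ 2
      = Complex.reCLM (trigPoly k0 c x * (starRingEnd ℂ) (trigPoly k0 c x)) := by
    intro x
    rw [Complex.mul_conj]
    simp [Complex.normSq_eq_norm_sq, ← Complex.ofReal_pow]
  simp_rw [hre]
  rw [ContinuousLinearMap.intervalIntegral_comp_comm _ (by
    apply Continuous.intervalIntegrable
    exact ((mob_trigPoly_continuous k0 c).mul (Complex.continuous_conj.comp (mob_trigPoly_continuous k0 c))))]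
  rw [key]
  simp [← Complex.ofReal_pow]

lemma mob_dftCoeff_sub (N : ℕ) (s s' : Fin N → ℂ) (k : ℤ) :
    dftCoeff N s k - dftCoeff N s' k = dftCoeff N (fun i => s i - s' i) k := by
  unfold dftCoeff
  rw [← mul_sub, ← Finset.sum_sub_distrib]
  simp_rw [← sub_mul]

lemma mob_norm_dftCoeff_le (N : ℕ) (s : Fin N → ℂ) (k : ℤ) :
    ‖dftCoeff N s k‖ ≤ (N : ℝ)⁻¹ * ∑ i : Fin N, ‖s i‖ := by
  unfold dftCoeff
  rw [norm_mul]
  gcongr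
  · simp
  refine (norm_sum_le _ _).trans ?_
  refine Finset.sum_le_sum fun i _ => ?_
  rw [norm_mul]
  have he : (-(2 * (Real.pi : ℂ) * Complex.I * (k : ℂ) * ((i.1 : ℂ) + 1) / (N : ℂ)))
      = ((-(2 * Real.pi * (k : ℝ) * ((i.1 : ℝ) + 1) / N) : ℝ) : ℂ) * Complex.I := by
    push_cast
    rcases Nat.eq_zero_or_pos N with h | h
    · simp [h]
    · field_simp
  rw [he, Complex.norm_exp_ofReal_mul_I, mul_one]

lemma mob_dftCoeff_zero (N : ℕ) (s : Fin N → ℂ) :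
    dftCoeff N s 0 = (N : ℂ)⁻¹ * ∑ i : Fin N, s i := by
  unfold dftCoeff
  congr 1
  refine Finset.sum_congr rfl fun i _ => ?_
  norm_num

lemma mob_dftCoeff_zero_perm (N : ℕ) (s : Fin N → ℂ) (h : Equiv.Perm (Fin N)) :
    dftCoeff N (fun i => s (h i)) 0 = dftCoeff N s 0 := by
  rw [mob_dftCoeff_zero, mob_dftCoeff_zero, Equiv.sum_comp h s]

lemma mob_geom_int {r : ℝ} (h0 : 0 ≤ r) (h1 : r < 1) :
    HasSum (fun k : ℤ => r ^ k.natAbs) ((1 - r)⁻¹ + r * (1 - r)⁻¹) := by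
  refine HasSum.of_nat_of_neg_add_one ?_ ?_
  · simpa using hasSum_geometric_of_lt_one h0 h1
  · have h2 := (hasSum_geometric_of_lt_one h0 h1).mul_left r
    have h3 : (fun n : ℕ => r * r ^ n) = fun n : ℕ => r ^ (-((n:ℤ) + 1)).natAbs := by
      funext n
      have h4 : (-((n : ℤ) + 1)).natAbs = n + 1 := by omega
      rw [h4, pow_succ]
      ring
    rwa [h3] at h2

lemma mob_geom_int_le {r : ℝ} (h0 : 0 ≤ r) (h1 : r < 1) :
    (∑' k : ℤ, r ^ k.natAbs) ≤ 2 / (1 - r) := by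
  rw [(mob_geom_int h0 h1).tsum_eq, div_eq_mul_inv]
  have h2 : (0:ℝ) < 1 - r := by linarith
  have hinv : 0 ≤ (1 - r)⁻¹ := by positivity
  linarith [mul_le_mul_of_nonneg_right (le_of_lt h1) hinv]

lemma mob_tail_bound (γ d : ℝ) (hγ : 0 < γ) (hd : 0 ≤ d) (a : ℤ → ℂ) (g : ℝ → ℂ) (k1 k0 : ℕ)
    (hk : k1 ≤ k0)
    (hsum : ∀ x : ℝ, HasSum (fun k : ℤ =>
      a k * Complex.exp (2 * (Real.pi : ℂ) * Complex.I * (k : ℂ) * (x : ℂ))) (g x))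
    (ha : ∀ k : ℤ, (k1 : ℤ) ≤ |k| → ‖a k‖ ≤ d * Real.exp (-γ * (|k| : ℤ)))
    (x : ℝ) :
    ‖g x - trigPoly k0 a x‖ ≤ 2 * d * Real.exp (-γ * k0) / (1 - Real.exp (-γ)) := by
  set r := Real.exp (-γ) with hr
  have hr0 : 0 ≤ r := Real.exp_nonneg _
  have hr1 : r < 1 := Real.exp_lt_one_iff.mpr (by linarith)
  have h1r : (0:ℝ) < 1 - r := by linarith
  set S := Finset.Icc (-(k0 : ℤ)) (k0 : ℤ) with hS
  set f := fun k : ℤ => a k * Complex.exp (2 * (Real.pi : ℂ) * Complex.I * (k : ℂ) * (x : ℂ)) with hf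
  have hsumm : Summable f := (hsum x).summable
  have hsplit : g x - trigPoly k0 a x = ∑' k : ↑((S : Set ℤ)ᶜ), f ↑k := by
    have h := Summable.sum_add_tsum_compl (s := S) hsumm
    rw [(hsum x).tsum_eq] at h
    have ht : trigPoly k0 a x = ∑ k ∈ S, f k := rfl
    rw [ht, ← h]
    ring
  rw [hsplit]
  have hmem : ∀ k : ↑((S : Set ℤ)ᶜ), k0 < (k : ℤ).natAbs := by
    rintro ⟨k, hk'⟩
    have h5 : ¬(-(k0:ℤ) ≤ k ∧ k ≤ (k0:ℤ)) := by
      simpa [hS, Set.mem_compl_iff] using hk'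
    simp only []
    omega
  have hb : ∀ k : ℤ, d * Real.exp (-γ * (|k| : ℤ)) = d * r ^ k.natAbs := by
    intro k
    have hcast : ((|k| : ℤ) : ℝ) = (k.natAbs : ℝ) := by
      rw [Nat.cast_natAbs, Int.cast_abs]
    rw [hcast, mul_comm (-γ), Real.exp_nat_mul]
  have hbsummable : Summable (fun k : ℤ => d * r ^ k.natAbs) :=
    ((mob_geom_int hr0 hr1).mul_left d).summable
  have hbsub : Summable (fun k : ↑((S : Set ℤ)ᶜ) => d * r ^ (k : ℤ).natAbs) :=
    hbsummable.subtype _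
  have hnormle : ∀ k : ↑((S : Set ℤ)ᶜ), ‖f ↑k‖ ≤ d * r ^ (k : ℤ).natAbs := by
    intro k
    have h1 : ‖f ↑k‖ = ‖a ↑k‖ := by
      rw [hf]
      simp only []
      rw [norm_mul]
      have he : (2 * (Real.pi : ℂ) * Complex.I * ((k : ℤ) : ℂ) * (x : ℂ))
          = ((2 * Real.pi * ((k : ℤ) : ℝ) * x : ℝ) : ℂ) * Complex.I := by push_cast; ring
      rw [he, Complex.norm_exp_ofReal_mul_I, mul_one]
    rw [h1, ← hb ↑k]
    refine ha ↑k ?_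
    have := hmem k
    rw [Int.abs_eq_natAbs]
    omega
  have hmain : ‖∑' k : ↑((S : Set ℤ)ᶜ), f ↑k‖ ≤ ∑' k : ↑((S : Set ℤ)ᶜ), d * r ^ (k : ℤ).natAbs :=
    tsum_of_norm_bounded hbsub.hasSum hnormle
  refine hmain.trans ?_
  set ψ : ↑((S : Set ℤ)ᶜ) → ℤ := fun k => if 0 ≤ (k : ℤ) then (k : ℤ) - k0 else (k : ℤ) + k0 with hψ
  have hinj : Function.Injective ψ := by
    rintro k l heq
    have hk2 := hmem k
    have hl2 := hmem l
    simp only [hψ] at heq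
    have : (k : ℤ) = (l : ℤ) := by
      split at heq <;> split at heq <;> omega
    exact Subtype.ext this
  have hpt : ∀ k : ↑((S : Set ℤ)ᶜ), d * r ^ (k : ℤ).natAbs
      ≤ (fun m : ℤ => d * r ^ k0 * r ^ m.natAbs) (ψ k) := by
    intro k
    have hk2 := hmem k
    refine le_of_eq ?_
    have harith : (k : ℤ).natAbs = k0 + (ψ k).natAbs := by
      simp only [hψ]
      split <;> omega
    simp only []
    rw [harith, pow_add]
    ring
  have hsum2 : Summable (fun m : ℤ => d * r ^ k0 * r ^ m.natAbs) :=
    ((mob_geom_int hr0 hr1).mul_left (d * r ^ k0)).summable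
  have h6 := Summable.tsum_le_tsum_of_inj ψ hinj (fun m _ => by positivity) hpt hbsub hsum2
  refine h6.trans ?_
  rw [((mob_geom_int hr0 hr1).mul_left (d * r ^ k0)).tsum_eq]
  have hexp : Real.exp (-γ * (k0:ℝ)) = r ^ k0 := by
    rw [mul_comm, Real.exp_nat_mul]
  rw [hexp]
  have hinv : (0:ℝ) ≤ (1 - r)⁻¹ := by positivity
  have h7 : (1 - r)⁻¹ + r * (1 - r)⁻¹ ≤ 2 / (1 - r) := by
    rw [div_eq_mul_inv]
    linarith [mul_le_mul_of_nonneg_right (le_of_lt hr1) hinv]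
  have h8 : (0:ℝ) ≤ d * r ^ k0 := by positivity
  calc d * r ^ k0 * ((1 - r)⁻¹ + r * (1 - r)⁻¹) ≤ d * r ^ k0 * (2 / (1 - r)) := by gcongr
    _ = 2 * d * r ^ k0 / (1 - r) := by ring

lemma mob_trigPoly_differentiable (k0 : ℕ) (c : ℤ → ℂ) : Differentiable ℝ (trigPoly k0 c) := by
  unfold trigPoly
  apply Differentiable.fun_sum
  intro k _
  have h1 : Differentiable ℝ fun x : ℝ => (2 * (Real.pi : ℂ) * Complex.I * (k : ℂ) * (x : ℂ)) :=
    (Complex.ofRealCLM.differentiable).const_mul _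
  have h2 : Differentiable ℂ Complex.exp := Complex.differentiable_exp
  exact ((h2.restrictScalars ℝ).comp h1).const_mul _

lemma mob_trigPoly_lip (k0 : ℕ) (c : ℤ → ℂ) (L : ℝ)
    (hL : ∀ x : ℝ, ‖deriv (trigPoly k0 c) x‖ ≤ L) (x y : ℝ) :
    ‖trigPoly k0 c x - trigPoly k0 c y‖ ≤ L * |x - y| := by
  have := Convex.norm_image_sub_le_of_norm_deriv_le (f := trigPoly k0 c) (s := Set.univ)
    (fun z _ => (mob_trigPoly_differentiable k0 c) z) (fun z _ => hL z) convex_univ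
    (Set.mem_univ y) (Set.mem_univ x)
  simpa [Real.norm_eq_abs] using this

lemma mob_telescope (T : ℕ → ℝ) (hrange : ∀ j, T j ∈ Set.Icc (0:ℝ) 1)
    (N δ : ℕ) :
    (∑ i ∈ Finset.range N, (T (i + δ) - T (i - δ))) ≤ 2 * δ := by
  have split : ∀ i, T (i + δ) - T (i - δ) = (T (i + δ) - T i) + (T i - T (i - δ)) := by
    intro i; ring
  simp_rw [split, Finset.sum_add_distrib]
  have part1 : (∑ i ∈ Finset.range N, (T (i + δ) - T i)) ≤ δ := by
    have inner : ∀ i, T (i + δ) - T i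
        = ∑ m ∈ Finset.range δ, ((fun m => T (i + m)) (m + 1) - (fun m => T (i + m)) m) := by
      intro i
      rw [Finset.sum_range_sub (fun m => T (i + m)) δ]
      simp
    simp_rw [inner]
    rw [Finset.sum_comm]
    have inner2 : ∀ m, (∑ i ∈ Finset.range N,
        ((fun m => T (i + m)) (m + 1) - (fun m => T (i + m)) m)) ≤ 1 := by
      intro m
      have hcongr : ∀ i, (fun m => T (i + m)) (m + 1) - (fun m => T (i + m)) m
          = (fun i => T (i + m)) (i + 1) - (fun i => T (i + m)) i := by
        intro i; simp only []; congr 2; omega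
      rw [Finset.sum_congr rfl fun i _ => hcongr i]
      rw [Finset.sum_range_sub (fun i => T (i + m)) N]
      have h1 := (hrange (N + m)).2
      have h2 := (hrange (0 + m)).1
      show T (N + m) - T (0 + m) ≤ 1
      linarith
    calc _ ≤ ∑ m ∈ Finset.range δ, (1:ℝ) := Finset.sum_le_sum fun m _ => inner2 m
      _ = δ := by simp
  have part2 : (∑ i ∈ Finset.range N, (T i - T (i - δ))) ≤ δ := by
    have inner : ∀ i, T i - T (i - δ)
        = ∑ m ∈ Finset.range δ, ((fun m => T (i - (δ - m))) (m + 1) - (fun m => T (i - (δ - m))) m) := by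
      intro i
      rw [Finset.sum_range_sub (fun m => T (i - (δ - m))) δ]
      simp
    simp_rw [inner]
    rw [Finset.sum_comm]
    have inner2 : ∀ m, m < δ → (∑ i ∈ Finset.range N,
        ((fun m => T (i - (δ - m))) (m + 1) - (fun m => T (i - (δ - m))) m)) ≤ 1 := by
      intro m hm
      have hcongr : ∀ i, (fun m => T (i - (δ - m))) (m + 1) - (fun m => T (i - (δ - m))) m
          = (fun i => T (i - (δ - m))) (i + 1) - (fun i => T (i - (δ - m))) i := by
        intro i; simp only []; congr 2; omega
      rw [Finset.sum_congr rfl fun i _ => hcongr i]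
      rw [Finset.sum_range_sub (fun i => T (i - (δ - m))) N]
      have h1 := (hrange (N - (δ - m))).2
      have h2 := (hrange (0 - (δ - m))).1
      show T (N - (δ - m)) - T (0 - (δ - m)) ≤ 1
      linarith
    calc _ ≤ ∑ m ∈ Finset.range δ, (1:ℝ) :=
        Finset.sum_le_sum fun m hm => inner2 m (Finset.mem_range.mp hm)
      _ = δ := by simp
  linarith

lemma mob_sq_sum3 (a b c : ℝ) : (a + b + c) ^ 2 ≤ 3 * (a ^ 2 + b ^ 2 + c ^ 2) := by
  have key : 3 * (a ^ 2 + b ^ 2 + c ^ 2) - (a + b + c) ^ 2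
      = (a - b) ^ 2 + (b - c) ^ 2 + (a - c) ^ 2 := by ring
  linarith [sq_nonneg (a - b), sq_nonneg (b - c), sq_nonneg (a - c)]

set_option maxHeartbeats 2000000 in
lemma mob_key_bound (γ d : ℝ) (hγ : 0 < γ) (hd : 0 ≤ d)
    (N k0 k1 δ Nδ : ℕ) (hN : 1 ≤ N)
    (g : ℝ → ℂ) (a : ℤ → ℂ) (h : Equiv.Perm (Fin N)) (t : Fin N → ℝ)
    (hmono : Monotone t) (hrange : ∀ i, t i ∈ Set.Icc (0:ℝ) 1)
    (hg1 : ∀ x : ℝ, ‖g x‖ < 1)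
    (hsum : ∀ x : ℝ, HasSum (fun k : ℤ =>
      a k * Complex.exp (2 * (Real.pi : ℂ) * Complex.I * (k : ℂ) * (x : ℂ))) (g x))
    (ha : ∀ k : ℤ, (k1 : ℤ) ≤ |k| → ‖a k‖ ≤ d * Real.exp (-γ * (|k| : ℤ)))
    (hgood : GoodPerm δ Nδ h)
    (hk1k0 : k1 ≤ k0)
    (hexpN : Real.exp (-γ * k0) ≤ 1 / N)
    (hderiv : ∀ x : ℝ, ‖deriv (trigPoly k0 a) x‖ ≤ 2 * Real.pi * k0) :
    (∫ x in (0:ℝ)..1,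
        ‖trigPoly k0 (dftCoeff N (fun i => g (t i))) x
          - trigPoly k0 (dftCoeff N (fun i => g (t (h i)))) x‖ ^ 2)
      ≤ (24 + 96 * Real.pi ^ 2 + 96 * d ^ 2 / (1 - Real.exp (-γ)) ^ 2)
        * ((k0 : ℝ) * Nδ / N + (k0 : ℝ) ^ 3 / N + (δ : ℝ) ^ 2 * (k0 : ℝ) ^ 3 / (N : ℝ) ^ 2) := by
  have hNR : (1:ℝ) ≤ (N:ℝ) := by exact_mod_cast hN
  have hNpos : (0:ℝ) < N := by linarith
  set r := Real.exp (-γ) with hrdef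
  have hr1 : r < 1 := Real.exp_lt_one_iff.mpr (by linarith)
  have hr0 : 0 < r := Real.exp_pos _
  have h1r : (0:ℝ) < 1 - r := by linarith
  set s : Fin N → ℂ := fun i => g (t i) with hs
  set s' : Fin N → ℂ := fun i => g (t (h i)) with hs'
  set D : Fin N → ℂ := fun i => s i - s' i with hD
  -- pointwise rewriting
  have hpt : ∀ x : ℝ, trigPoly k0 (dftCoeff N s) x - trigPoly k0 (dftCoeff N s') x
      = trigPoly k0 (dftCoeff N D) x := by
    intro x
    unfold trigPoly
    rw [← Finset.sum_sub_distrib]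
    refine Finset.sum_congr rfl fun k _ => ?_
    rw [← sub_mul, mob_dftCoeff_sub]
  have hint : (∫ x in (0:ℝ)..1,
      ‖trigPoly k0 (dftCoeff N s) x - trigPoly k0 (dftCoeff N s') x‖ ^ 2)
      = ∑ k ∈ Finset.Icc (-(k0 : ℤ)) (k0 : ℤ), ‖dftCoeff N D k‖ ^ 2 := by
    simp_rw [hpt]
    exact mob_parseval k0 (dftCoeff N D)
  rw [hint]
  -- zero coefficient vanishes
  have hc0 : dftCoeff N D 0 = 0 := by
    have := mob_dftCoeff_sub N s s' 0
    rw [hD, ← this]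
    have h2 : dftCoeff N s' 0 = dftCoeff N s 0 := mob_dftCoeff_zero_perm N s h
    rw [h2, sub_self]
  -- sum of norms of differences
  set SB : ℝ := ∑ i : Fin N, ‖D i‖ with hSB
  have hSB0 : 0 ≤ SB := Finset.sum_nonneg fun i _ => norm_nonneg _
  have hck : ∀ k : ℤ, ‖dftCoeff N D k‖ ≤ SB / N := by
    intro k
    have := mob_norm_dftCoeff_le N D k
    rw [div_eq_inv_mul]
    exact this
  -- bound the coefficient sum by 2 k0 (SB/N)^2
  have hzero_mem : (0:ℤ) ∈ Finset.Icc (-(k0 : ℤ)) (k0 : ℤ) := by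
    simp [Finset.mem_Icc]
  have hcard : ((Finset.Icc (-(k0 : ℤ)) (k0 : ℤ)).erase 0).card = 2 * k0 := by
    rw [Finset.card_erase_of_mem hzero_mem, Int.card_Icc]
    omega
  have hsum_le : (∑ k ∈ Finset.Icc (-(k0 : ℤ)) (k0 : ℤ), ‖dftCoeff N D k‖ ^ 2)
      ≤ 2 * (k0:ℝ) * (SB / N) ^ 2 := by
    rw [← Finset.sum_erase (Finset.Icc (-(k0 : ℤ)) (k0 : ℤ)) (by rw [hc0]; simp : ‖dftCoeff N D 0‖ ^ 2 = 0)]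
    calc (∑ k ∈ (Finset.Icc (-(k0 : ℤ)) (k0 : ℤ)).erase 0, ‖dftCoeff N D k‖ ^ 2)
        ≤ ∑ k ∈ (Finset.Icc (-(k0 : ℤ)) (k0 : ℤ)).erase 0, (SB / N) ^ 2 := by
          refine Finset.sum_le_sum fun k _ => ?_
          exact pow_le_pow_left₀ (norm_nonneg _) (hck k) 2
      _ = (2 * k0 : ℕ) * (SB / N) ^ 2 := by rw [Finset.sum_const, hcard]; simp
      _ = 2 * (k0:ℝ) * (SB / N) ^ 2 := by push_cast; ring
  refine hsum_le.trans ?_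
  -- now bound SB
  set A : Finset (Fin N) :=
    Finset.univ.filter (fun i : Fin N => (δ : ℤ) < |(i.1 : ℤ) - ((h i).1 : ℤ)|) with hA
  set nbar : ℕ := A.card with hnbar
  have hnbarNδ : nbar ≤ Nδ := hgood
  have hnbarN : nbar ≤ N := by
    have := Finset.card_filter_le Finset.univ
      (fun i : Fin N => (δ : ℤ) < |(i.1 : ℤ) - ((h i).1 : ℤ)|)
    simpa using this
  -- tail bound
  set τ : ℝ := 2 * d * Real.exp (-γ * (k0:ℝ)) / (1 - r) with hτdef
  have htail : ∀ x : ℝ, ‖g x - trigPoly k0 a x‖ ≤ τ :=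
    mob_tail_bound γ d hγ hd a g k1 k0 hk1k0 hsum ha
  have hτ0 : 0 ≤ τ := by
    rw [hτdef]
    have : (0:ℝ) ≤ 2 * d * Real.exp (-γ * (k0:ℝ)) := by positivity
    exact div_nonneg this (le_of_lt h1r)
  have hτN : τ ≤ 2 * d / ((1 - r) * N) := by
    rw [hτdef]
    have h2 : 2 * d * Real.exp (-γ * (k0:ℝ)) ≤ 2 * d * (1 / N) :=
      mul_le_mul_of_nonneg_left hexpN (by positivity)
    have h3 : 2 * d * (1/(N:ℝ)) / (1 - r) = 2 * d / ((1 - r) * N) := by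
      rw [mul_one_div, div_div, mul_comm (N:ℝ) (1 - r)]
    calc 2 * d * Real.exp (-γ * (k0:ℝ)) / (1 - r) ≤ 2 * d * (1/(N:ℝ)) / (1 - r) :=
          (div_le_div_iff_of_pos_right h1r).mpr h2
      _ = 2 * d / ((1 - r) * N) := h3
  -- the monotone extension T
  set T : ℕ → ℝ := fun j => t ⟨min j (N - 1), by omega⟩ with hT
  have hTmono : Monotone T := by
    intro p q hpq
    apply hmono
    simp only [Fin.mk_le_mk]
    omega
  have hTrange : ∀ j, T j ∈ Set.Icc (0:ℝ) 1 := fun j => hrange _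
  have hTt : ∀ i : Fin N, t i = T i.1 := by
    intro i
    have hmin : min i.1 (N - 1) = i.1 := by have := i.isLt; omega
    simp only [hT, hmin, Fin.eta]
  -- bound on each far term
  have hDle : ∀ i : Fin N, ‖D i‖ ≤ 2 := by
    intro i
    have h1 := hg1 (t i)
    have h2 := hg1 (t (h i))
    calc ‖D i‖ ≤ ‖s i‖ + ‖s' i‖ := norm_sub_le _ _
      _ ≤ 2 := by rw [hs, hs']; simp only []; linarith
  have hfar : (∑ i ∈ A, ‖D i‖) ≤ (nbar : ℝ) * 2 := by
    have := Finset.sum_le_card_nsmul A (fun i => ‖D i‖) 2 (fun i _ => hDle i)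
    simpa [nsmul_eq_mul, hnbar] using this
  -- bound on each close term
  set P := trigPoly k0 a with hP
  have hclose1 : ∀ i ∈ Finset.univ.filter
      (fun i : Fin N => ¬ ((δ : ℤ) < |(i.1 : ℤ) - ((h i).1 : ℤ)|)),
      ‖D i‖ ≤ 2 * Real.pi * k0 * (T (i.1 + δ) - T (i.1 - δ)) + 2 * τ := by
    intro i hi
    have hiδ : |(i.1 : ℤ) - ((h i).1 : ℤ)| ≤ (δ : ℤ) :=
      not_lt.mp (Finset.mem_filter.mp hi).2
    obtain ⟨hd1, hd2⟩ := abs_le.mp hiδ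
    have e1 : ‖g (t i) - P (t i)‖ ≤ τ := htail _
    have e2 : ‖g (t (h i)) - P (t (h i))‖ ≤ τ := htail _
    have e3 : ‖P (t i) - P (t (h i))‖ ≤ 2 * Real.pi * k0 * |t i - t (h i)| :=
      mob_trigPoly_lip k0 a _ hderiv _ _
    have e4 : |t i - t (h i)| ≤ T (i.1 + δ) - T (i.1 - δ) := by
      have l1 : T (i.1 - δ) ≤ T i.1 := hTmono (by omega)
      have l2 : T i.1 ≤ T (i.1 + δ) := hTmono (by omega)
      have l3 : T (i.1 - δ) ≤ T ((h i).1) := hTmono (by omega)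
      have l4 : T ((h i).1) ≤ T (i.1 + δ) := hTmono (by omega)
      rw [hTt i, hTt (h i), abs_sub_le_iff]
      constructor <;> linarith
    have e5 : 2 * Real.pi * k0 * |t i - t (h i)| ≤ 2 * Real.pi * k0 * (T (i.1 + δ) - T (i.1 - δ)) := by
      apply mul_le_mul_of_nonneg_left e4 (by positivity)
    have hDeq : D i = (g (t i) - P (t i)) + (P (t i) - P (t (h i)))
        + (P (t (h i)) - g (t (h i))) := by
      rw [hD, hs, hs']
      simp only []
      ring
    rw [hDeq]
    calc ‖_ + _ + _‖ ≤ ‖g (t i) - P (t i)‖ + ‖P (t i) - P (t (h i))‖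
          + ‖P (t (h i)) - g (t (h i))‖ := norm_add₃_le
      _ ≤ τ + 2 * Real.pi * k0 * (T (i.1 + δ) - T (i.1 - δ)) + τ := by
          have e2' : ‖P (t (h i)) - g (t (h i))‖ ≤ τ := by rw [norm_sub_rev]; exact e2
          linarith
      _ = 2 * Real.pi * k0 * (T (i.1 + δ) - T (i.1 - δ)) + 2 * τ := by ring
  -- sum over close indices
  have hteleFin : (∑ i : Fin N, (T (i.1 + δ) - T (i.1 - δ))) ≤ 2 * δ := by
    rw [Fin.sum_univ_eq_sum_range (fun j => T (j + δ) - T (j - δ)) N]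
    exact mob_telescope T hTrange N δ
  set B : Finset (Fin N) := Finset.univ.filter
      (fun i : Fin N => ¬ ((δ : ℤ) < |(i.1 : ℤ) - ((h i).1 : ℤ)|)) with hB
  have hext : (∑ i ∈ B, 2 * Real.pi * (k0:ℝ) * (T (i.1 + δ) - T (i.1 - δ)))
      ≤ ∑ i : Fin N, 2 * Real.pi * (k0:ℝ) * (T (i.1 + δ) - T (i.1 - δ)) := by
    refine Finset.sum_le_sum_of_subset_of_nonneg (Finset.subset_univ _) (fun i _ _ => ?_)
    have h9 : T (i.1 - δ) ≤ T (i.1 + δ) := hTmono (by omega)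
    have h10 : (0:ℝ) ≤ 2 * Real.pi * (k0:ℝ) := by positivity
    exact mul_nonneg h10 (by linarith)
  have hconstsum : (∑ _i ∈ B, 2 * τ) ≤ (N:ℝ) * (2 * τ) := by
    rw [Finset.sum_const, nsmul_eq_mul]
    have hle : B.card ≤ N := by
      have := Finset.card_filter_le Finset.univ
        (fun i : Fin N => ¬ ((δ : ℤ) < |(i.1 : ℤ) - ((h i).1 : ℤ)|))
      simpa [hB] using this
    have hcB : (B.card : ℝ) ≤ (N : ℝ) := by exact_mod_cast hle
    exact mul_le_mul_of_nonneg_right hcB (by linarith)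
  have hclose : (∑ i ∈ B, ‖D i‖) ≤ 2 * Real.pi * (k0:ℝ) * (2 * δ) + (N : ℝ) * (2 * τ) := by
    calc (∑ i ∈ B, ‖D i‖)
        ≤ ∑ i ∈ B, (2 * Real.pi * (k0:ℝ) * (T (i.1 + δ) - T (i.1 - δ)) + 2 * τ) :=
          Finset.sum_le_sum hclose1
      _ = (∑ i ∈ B, 2 * Real.pi * (k0:ℝ) * (T (i.1 + δ) - T (i.1 - δ)))
          + (∑ _i ∈ B, 2 * τ) := Finset.sum_add_distrib
      _ ≤ (∑ i : Fin N, 2 * Real.pi * (k0:ℝ) * (T (i.1 + δ) - T (i.1 - δ)))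
          + (N:ℝ) * (2 * τ) := add_le_add hext hconstsum
      _ = 2 * Real.pi * (k0:ℝ) * (∑ i : Fin N, (T (i.1 + δ) - T (i.1 - δ)))
          + (N:ℝ) * (2 * τ) := by rw [← Finset.mul_sum]
      _ ≤ 2 * Real.pi * (k0:ℝ) * (2 * δ) + (N : ℝ) * (2 * τ) := by
          have h10 : (0:ℝ) ≤ 2 * Real.pi * (k0:ℝ) := by positivity
          linarith [mul_le_mul_of_nonneg_left hteleFin h10]
  -- total SB bound
  have hSBb : SB ≤ 2 * nbar + 4 * Real.pi * k0 * δ + 2 * N * τ := by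
    have hsplit := Finset.sum_filter_add_sum_filter_not Finset.univ
      (fun i : Fin N => (δ : ℤ) < |(i.1 : ℤ) - ((h i).1 : ℤ)|) (fun i => ‖D i‖)
    have hSBeq : SB = (∑ i ∈ A, ‖D i‖) + (∑ i ∈ B, ‖D i‖) := by
      rw [hSB, ← hsplit, hA, hB]
    rw [hSBeq]
    have := add_le_add hfar hclose
    calc _ ≤ (nbar : ℝ) * 2 + (2 * Real.pi * (k0:ℝ) * (2 * δ) + (N : ℝ) * (2 * τ)) := this
      _ = 2 * nbar + 4 * Real.pi * k0 * δ + 2 * N * τ := by ring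
  -- make everything opaque before the numeric finish
  clear_value SB
  clear_value τ
  clear_value T
  clear_value D
  clear_value s s'
  clear_value nbar
  clear_value A
  clear_value B
  clear_value r
  -- numeric finish
  have hπ := Real.pi_pos
  have hk0R : (0:ℝ) ≤ (k0:ℝ) := Nat.cast_nonneg _
  have hnbR : (0:ℝ) ≤ (nbar:ℝ) := Nat.cast_nonneg _
  have hδR : (0:ℝ) ≤ (δ:ℝ) := Nat.cast_nonneg _
  have hNδR : (nbar:ℝ) ≤ (Nδ:ℝ) := by exact_mod_cast hnbarNδ
  have hNbR : (nbar:ℝ) ≤ (N:ℝ) := by exact_mod_cast hnbarN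
  have hsq2 : SB ^ 2 ≤ 12 * (nbar:ℝ)^2 + 48 * Real.pi^2 * (k0:ℝ)^2 * (δ:ℝ)^2
      + 12 * (N:ℝ)^2 * τ^2 := by
    have habc : SB ^ 2 ≤ (2 * (nbar:ℝ) + 4 * Real.pi * (k0:ℝ) * (δ:ℝ) + 2 * (N:ℝ) * τ) ^ 2 :=
      pow_le_pow_left₀ hSB0 hSBb 2
    have hexp : (2 * (nbar:ℝ) + 4 * Real.pi * (k0:ℝ) * (δ:ℝ) + 2 * (N:ℝ) * τ) ^ 2
        ≤ 12 * (nbar:ℝ)^2 + 48 * Real.pi^2 * (k0:ℝ)^2 * (δ:ℝ)^2 + 12 * (N:ℝ)^2 * τ^2 := by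
      have h31 := mob_sq_sum3 (2 * (nbar:ℝ)) (4 * Real.pi * (k0:ℝ) * (δ:ℝ)) (2 * (N:ℝ) * τ)
      have h32 : 3 * ((2 * (nbar:ℝ)) ^ 2 + (4 * Real.pi * (k0:ℝ) * (δ:ℝ)) ^ 2
          + (2 * (N:ℝ) * τ) ^ 2)
          = 12 * (nbar:ℝ)^2 + 48 * Real.pi^2 * (k0:ℝ)^2 * (δ:ℝ)^2 + 12 * (N:ℝ)^2 * τ^2 := by
        ring
      linarith
    linarith
  have hfrac : (SB / N) ^ 2 ≤ (12 * (nbar:ℝ)^2 + 48 * Real.pi^2 * (k0:ℝ)^2 * (δ:ℝ)^2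
      + 12 * (N:ℝ)^2 * τ^2) / (N:ℝ)^2 := by
    rw [div_pow]
    exact (div_le_div_iff_of_pos_right (by positivity)).mpr hsq2

  have hc30 : (0:ℝ) ≤ 96 * d^2 / (1 - r)^2 := by positivity
  have hτsq : (N:ℝ)^2 * τ^2 ≤ 4 * d^2 / (1 - r)^2 := by
    have h2 : τ^2 ≤ (2*d/((1 - r)*N))^2 := pow_le_pow_left₀ hτ0 hτN 2
    have h3 : (N:ℝ)^2 * (2*d/((1 - r)*N))^2 = 4*d^2/(1 - r)^2 := by
      field_simp
      ring
    calc (N:ℝ)^2 * τ^2 ≤ (N:ℝ)^2 * (2*d/((1 - r)*N))^2 :=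
          mul_le_mul_of_nonneg_left h2 (by positivity)
      _ = 4*d^2/(1 - r)^2 := h3
  have hk0cube : (k0:ℝ) ≤ (k0:ℝ)^3 := by
    have : k0 ≤ k0^3 := Nat.le_self_pow (by norm_num) k0
    exact_mod_cast this
  have step1 : 2*(k0:ℝ)*(SB/N)^2
      ≤ 2*(k0:ℝ)*((12 * (nbar:ℝ)^2 + 48 * Real.pi^2 * (k0:ℝ)^2 * (δ:ℝ)^2
        + 12 * (N:ℝ)^2 * τ^2) / (N:ℝ)^2) :=
    mul_le_mul_of_nonneg_left hfrac (by positivity)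
  have step2 : 2*(k0:ℝ)*((12 * (nbar:ℝ)^2 + 48 * Real.pi^2 * (k0:ℝ)^2 * (δ:ℝ)^2
        + 12 * (N:ℝ)^2 * τ^2) / (N:ℝ)^2)
      = (24*(k0:ℝ)*(nbar:ℝ)^2 + 96*Real.pi^2*((δ:ℝ)^2*(k0:ℝ)^3)
        + 24*(k0:ℝ)*((N:ℝ)^2*τ^2)) / (N:ℝ)^2 := by ring
  have n1 : 24*(k0:ℝ)*(nbar:ℝ)^2 ≤ 24*((k0:ℝ)*(Nδ:ℝ)*(N:ℝ)) := by
    have hbb : (nbar:ℝ) * (nbar:ℝ) ≤ (Nδ:ℝ) * (N:ℝ) :=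
      mul_le_mul hNδR hNbR hnbR (Nat.cast_nonneg (α := ℝ) Nδ)
    calc 24*(k0:ℝ)*(nbar:ℝ)^2 = 24*(k0:ℝ)*((nbar:ℝ)*(nbar:ℝ)) := by ring
      _ ≤ 24*(k0:ℝ)*((Nδ:ℝ)*(N:ℝ)) := mul_le_mul_of_nonneg_left hbb (by positivity)
      _ = 24*((k0:ℝ)*(Nδ:ℝ)*(N:ℝ)) := by ring
  have n3 : 24*(k0:ℝ)*((N:ℝ)^2*τ^2) ≤ 24*(k0:ℝ)*(4*d^2/(1 - r)^2) :=
    mul_le_mul_of_nonneg_left hτsq (by positivity)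
  have step3 : (24*(k0:ℝ)*(nbar:ℝ)^2 + 96*Real.pi^2*((δ:ℝ)^2*(k0:ℝ)^3)
        + 24*(k0:ℝ)*((N:ℝ)^2*τ^2)) / (N:ℝ)^2
      ≤ (24*((k0:ℝ)*(Nδ:ℝ)*(N:ℝ)) + 96*Real.pi^2*((δ:ℝ)^2*(k0:ℝ)^3)
        + 24*(k0:ℝ)*(4*d^2/(1 - r)^2)) / (N:ℝ)^2 := by
    apply (div_le_div_iff_of_pos_right (by positivity)).mpr
    linarith
  set X : ℝ := (k0 : ℝ) * Nδ / N with hX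
  set Y : ℝ := (k0 : ℝ) ^ 3 / N with hY
  set Z : ℝ := (δ : ℝ) ^ 2 * (k0 : ℝ) ^ 3 / (N : ℝ) ^ 2 with hZ
  have hX0 : 0 ≤ X := by rw [hX]; positivity
  have hY0 : 0 ≤ Y := by rw [hY]; positivity
  have hZ0 : 0 ≤ Z := by rw [hZ]; positivity
  have e1 : 24*((k0:ℝ)*(Nδ:ℝ)*(N:ℝ))/(N:ℝ)^2 = 24*X := by
    rw [hX]
    field_simp
  have e2 : 96*Real.pi^2*((δ:ℝ)^2*(k0:ℝ)^3)/(N:ℝ)^2 = 96*Real.pi^2*Z := by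
    rw [hZ]
    ring
  have hdivk : (k0:ℝ)/(N:ℝ)^2 ≤ (k0:ℝ)^3/(N:ℝ) := by
    rw [div_le_div_iff₀ (by positivity) hNpos]
    have hNN : (N:ℝ) ≤ (N:ℝ)^2 := by
      calc (N:ℝ) = (N:ℝ) * 1 := by ring
        _ ≤ (N:ℝ) * (N:ℝ) := mul_le_mul_of_nonneg_left hNR (by linarith)
        _ = (N:ℝ)^2 := by ring
    calc (k0:ℝ) * (N:ℝ) ≤ (k0:ℝ)^3 * (N:ℝ) :=
          mul_le_mul_of_nonneg_right hk0cube (by linarith)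
      _ ≤ (k0:ℝ)^3 * (N:ℝ)^2 := mul_le_mul_of_nonneg_left hNN (by positivity)
  have e3 : 24*(k0:ℝ)*(4*d^2/(1 - r)^2)/(N:ℝ)^2 ≤ (96*d^2/(1 - r)^2)*Y := by
    have heq : 24*(k0:ℝ)*(4*d^2/(1 - r)^2)/(N:ℝ)^2 = (96*d^2/(1 - r)^2)*((k0:ℝ)/(N:ℝ)^2) := by
      ring
    rw [heq, hY]
    exact mul_le_mul_of_nonneg_left hdivk hc30
  have step4 : (24*((k0:ℝ)*(Nδ:ℝ)*(N:ℝ)) + 96*Real.pi^2*((δ:ℝ)^2*(k0:ℝ)^3)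
        + 24*(k0:ℝ)*(4*d^2/(1 - r)^2)) / (N:ℝ)^2
      ≤ 24*X + 96*Real.pi^2*Z + (96*d^2/(1 - r)^2)*Y := by
    have hsplit3 : (24*((k0:ℝ)*(Nδ:ℝ)*(N:ℝ)) + 96*Real.pi^2*((δ:ℝ)^2*(k0:ℝ)^3)
        + 24*(k0:ℝ)*(4*d^2/(1 - r)^2)) / (N:ℝ)^2
        = 24*((k0:ℝ)*(Nδ:ℝ)*(N:ℝ))/(N:ℝ)^2 + 96*Real.pi^2*((δ:ℝ)^2*(k0:ℝ)^3)/(N:ℝ)^2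
          + 24*(k0:ℝ)*(4*d^2/(1 - r)^2)/(N:ℝ)^2 := by ring
    rw [hsplit3, e1, e2]
    linarith [e3]
  have step5 : 24*X + 96*Real.pi^2*Z + (96*d^2/(1 - r)^2)*Y
      ≤ (24 + 96 * Real.pi ^ 2 + 96 * d ^ 2 / (1 - r) ^ 2) * (X + Y + Z) := by
    have key : (24 + 96 * Real.pi ^ 2 + 96 * d ^ 2 / (1 - r) ^ 2) * (X + Y + Z)
        - (24*X + 96*Real.pi^2*Z + (96*d^2/(1 - r)^2)*Y)
        = (96*Real.pi^2 + 96*d^2/(1 - r)^2) * X + (24 + 96*Real.pi^2) * Y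
          + (24 + 96*d^2/(1 - r)^2) * Z := by ring
    have p1 : (0:ℝ) ≤ (96*Real.pi^2 + 96*d^2/(1 - r)^2) * X :=
      mul_nonneg (by positivity) hX0
    have p2 : (0:ℝ) ≤ (24 + 96*Real.pi^2) * Y := mul_nonneg (by positivity) hY0
    have p3 : (0:ℝ) ≤ (24 + 96*d^2/(1 - r)^2) * Z := mul_nonneg (by positivity) hZ0
    linarith
  calc 2*(k0:ℝ)*(SB/N)^2 ≤ _ := step1
    _ = _ := step2
    _ ≤ _ := step3
    _ ≤ _ := step4
    _ ≤ (24 + 96 * Real.pi ^ 2 + 96 * d ^ 2 / (1 - r) ^ 2) * (X + Y + Z) := step5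


/-- Misordering error: for `g ~ qbl(k1, γ)` with witness `d`,
`k0 = ⌈log N / γ⌉`, `N ≥ e^{γ k1}`, `‖(g^{k0})'‖_∞ ≤ 2π k0`, and a `good(δ̄, N_δ̄)`
permutation `h`, there is `C = C(d, γ)` with
`E[‖ĝ^{k0} − g̃^{k0}‖₂²] ≤ C (k0 N_δ̄/N + k0³/N + δ̄² k0³/N²)`. -/
theorem misordering_error_bound (γ : ℝ) (hγ : 0 < γ) (d : ℝ) (hd : 0 ≤ d) :
    ∃ C : ℝ, ∀ (k1 N : ℕ) (Ω : Type) [MeasurableSpace Ω] (μ : Measure Ω)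
      [IsProbabilityMeasure μ] (t : Fin N → Ω → ℝ) (g : ℝ → ℂ) (a : ℤ → ℂ)
      (h : Equiv.Perm (Fin N)) (δ Nδ : ℕ) (k0 : ℕ),
      IsUniformOrderStats μ 1 t →
      Function.Periodic g 1 →
      (∀ x : ℝ, ‖g x‖ < 1) →
      (∀ x : ℝ, HasSum (fun k : ℤ =>
        a k * Complex.exp (2 * (Real.pi : ℂ) * Complex.I * (k : ℂ) * (x : ℂ))) (g x)) →
      (∀ k : ℤ, (k1 : ℤ) ≤ |k| → ‖a k‖ ≤ d * Real.exp (-γ * (|k| : ℤ))) →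
      GoodPerm δ Nδ h →
      k0 = ⌈Real.log N / γ⌉₊ →
      Real.exp (γ * k1) ≤ N →
      (∀ x : ℝ, ‖deriv (trigPoly k0 a) x‖ ≤ 2 * Real.pi * k0) →
      (∫ ω, (∫ x in (0:ℝ)..1,
          ‖trigPoly k0 (dftCoeff N (fun i => g (t i ω))) x
            - trigPoly k0 (dftCoeff N (fun i => g (t (h i) ω))) x‖ ^ 2) ∂μ)
        ≤ C * ((k0 : ℝ) * Nδ / N + (k0 : ℝ) ^ 3 / N
            + (δ : ℝ) ^ 2 * (k0 : ℝ) ^ 3 / (N : ℝ) ^ 2) := by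
  refine ⟨24 + 96 * Real.pi ^ 2 + 96 * d ^ 2 / (1 - Real.exp (-γ)) ^ 2, ?_⟩
  intro k1 N Ω _ μ _ t g a h δ Nδ k0 hstats hper hg1 hsum ha hgood hk0 hek1 hderiv
  obtain ⟨u, humeas, _hindep, humap, hω⟩ := hstats
  -- N ≥ 1
  have hexp1 : (1:ℝ) ≤ Real.exp (γ * k1) := by
    rw [Real.one_le_exp_iff]
    positivity
  have hNR : (1:ℝ) ≤ (N:ℝ) := le_trans hexp1 hek1
  have hN : 1 ≤ N := by exact_mod_cast hNR
  have hNpos : (0:ℝ) < N := by linarith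
  -- k1 ≤ k0
  have hlogN : γ * k1 ≤ Real.log N := by
    rw [← Real.exp_le_exp, Real.exp_log hNpos]
    exact hek1
  have hk1k0 : k1 ≤ k0 := by
    have h1 : (k1:ℝ) ≤ Real.log N / γ := by
      rw [le_div_iff₀ hγ]
      linarith [hlogN]
    have h2 : Real.log N / γ ≤ (k0:ℝ) := by
      rw [hk0]
      exact Nat.le_ceil _
    exact_mod_cast le_trans h1 h2
  -- exp(-γ k0) ≤ 1/N
  have hexpN : Real.exp (-γ * k0) ≤ 1 / N := by
    have h1 : Real.log N ≤ γ * k0 := by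
      have h2 : Real.log N / γ ≤ (k0:ℝ) := hk0 ▸ Nat.le_ceil _
      calc Real.log N = γ * (Real.log N / γ) := by field_simp
        _ ≤ γ * k0 := by apply mul_le_mul_of_nonneg_left h2 (le_of_lt hγ)
    have h3 : Real.exp (-γ * k0) ≤ Real.exp (-(Real.log N)) := by
      apply Real.exp_le_exp.mpr
      linarith
    rw [Real.exp_neg, Real.exp_log hNpos] at h3
    rw [one_div]
    exact h3
  -- a.e. all samples in [0,1]
  have haeu : ∀ᵐ ω ∂μ, ∀ i, u i ω ∈ Set.Icc (0:ℝ) 1 := by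
    rw [MeasureTheory.ae_all_iff]
    intro i
    rw [ae_iff]
    have hset : {ω | ¬ u i ω ∈ Set.Icc (0:ℝ) 1} = u i ⁻¹' (Set.Icc (0:ℝ) 1)ᶜ := rfl
    rw [hset, ← Measure.map_apply (humeas i) measurableSet_Icc.compl, humap i]
    simp [Measure.restrict_apply measurableSet_Icc.compl]
  -- reduce to a.e. pointwise bound
  set C : ℝ := 24 + 96 * Real.pi ^ 2 + 96 * d ^ 2 / (1 - Real.exp (-γ)) ^ 2 with hC
  set B : ℝ := C * ((k0 : ℝ) * Nδ / N + (k0 : ℝ) ^ 3 / N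
      + (δ : ℝ) ^ 2 * (k0 : ℝ) ^ 3 / (N : ℝ) ^ 2) with hB
  have hmono_b : (fun ω => (∫ x in (0:ℝ)..1,
      ‖trigPoly k0 (dftCoeff N (fun i => g (t i ω))) x
        - trigPoly k0 (dftCoeff N (fun i => g (t (h i) ω))) x‖ ^ 2)) ≤ᵐ[μ] fun _ => B := by
    filter_upwards [haeu] with ω hωu
    obtain ⟨hmonoω, σ, hσ⟩ := hω ω
    have hrange : ∀ i, t i ω ∈ Set.Icc (0:ℝ) 1 := by
      intro i
      rw [hσ i]
      exact hωu (σ i)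
    exact mob_key_bound γ d hγ hd N k0 k1 δ Nδ hN g a h (fun i => t i ω) hmonoω hrange
      hg1 hsum ha hgood hk1k0 hexpN hderiv
  have hnonneg : (0:Ω → ℝ) ≤ᵐ[μ] fun ω => (∫ x in (0:ℝ)..1,
      ‖trigPoly k0 (dftCoeff N (fun i => g (t i ω))) x
        - trigPoly k0 (dftCoeff N (fun i => g (t (h i) ω))) x‖ ^ 2) := by
    refine Filter.Eventually.of_forall fun ω => ?_
    exact intervalIntegral.integral_nonneg (by norm_num) (fun x _ => by positivity)
  have := integral_mono_of_nonneg hnonneg (integrable_const B) hmono_b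
  calc _ ≤ ∫ _ω, B ∂μ := this
    _ = B := by simp
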